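/- (Strong duality between the primal QP (9) and the dual (10).) Let D, N be positive integers, ε ≥ 0, ρ > 0, K ∈ ℝ^{D×D} symmetric positive semidefinite, Φ₀ ∈ ℝ^{D×N}, y ∈ ℝ^N, and set K₀ := Φ₀ᵀ K Φ₀. Then the infimum of ∑_{n=1}^N (ξ_n + ζ_n) + ρ cᵀ K c over all (c, ξ, ζ) ∈ ℝ^D × ℝ^N × ℝ^N satisfying ξ ≥ y − Φ₀ᵀKc − ε1_N, ξ ≥ 0, ζ ≥ −y + Φ₀ᵀKc − ε1_N, ζ ≥ 0 (entrywise) equals the negative of the infimum of (1/(4ρ)) (α−β)ᵀ K₀ (α−β) − (y − ε1_N)ᵀ α + (y + ε1_N)ᵀ β over all α, β ∈ ℝ^N with 0 ≤ α ≤ 1_N and 0 ≤ β ≤ 1_N (entrywise). -/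

import Mathlib

open Matrix Finset

private lemma kkt_coord (a t α : ℝ) (ha : 0 ≤ a) (h0 : 0 ≤ α) (h1 : α ≤ 1)
    (h : ∀ s : ℝ, 0 ≤ α + s → α + s ≤ 1 → 0 ≤ a * s ^ 2 - t * s) :
    α * t = max t 0 := by
  have ha1 : (0:ℝ) < a + 1 := by linarith
  rcases lt_trichotomy t 0 with ht | ht | ht
  · have hα : α = 0 := by
      by_contra hne
      have hαpos : 0 < α := lt_of_le_of_ne h0 (Ne.symm hne)
      have hmpos : 0 < min α (-t / (a + 1)) := lt_min hαpos (div_pos (by linarith) ha1)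
      set m : ℝ := min α (-t / (a + 1)) with hm
      have hle1 : m ≤ α := min_le_left _ _
      have hle2 : m ≤ -t / (a + 1) := min_le_right _ _
      have := h (-m) (by linarith) (by linarith)
      have hkey : a * m + t ≤ t / (a + 1) := by
        have h3 : a * m ≤ a * (-t / (a+1)) := mul_le_mul_of_nonneg_left hle2 ha
        have h2 : a * (-t/(a+1)) + t = t/(a+1) := by field_simp; ring
        linarith
      have htneg : t / (a + 1) < 0 := div_neg_of_neg_of_pos ht ha1
      nlinarith
    rw [hα]
    simp [max_eq_right (le_of_lt ht)]
  · simp [ht]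
  · have hα : α = 1 := by
      by_contra hne
      have hαlt : α < 1 := lt_of_le_of_ne h1 hne
      have hmpos : 0 < min (1 - α) (t / (a + 1)) := lt_min (by linarith) (div_pos ht ha1)
      set m : ℝ := min (1 - α) (t / (a + 1)) with hm
      have hle1 : m ≤ 1 - α := min_le_left _ _
      have hle2 : m ≤ t / (a + 1) := min_le_right _ _
      have := h m (by linarith) (by linarith)
      have hkey : a * m - t ≤ -t / (a + 1) := by
        have h3 : a * m ≤ a * (t / (a+1)) := mul_le_mul_of_nonneg_left hle2 ha
        have h2 : a * (t/(a+1)) - t = -t/(a+1) := by field_simp; ring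
        linarith
      have htneg : -t / (a + 1) < 0 := by
        apply div_neg_of_neg_of_pos <;> linarith
      nlinarith
    rw [hα, max_eq_left (le_of_lt ht)]; ring

private lemma psd_nonneg {D : ℕ} (K : Matrix (Fin D) (Fin D) ℝ) (hK : K.PosSemidef)
    (x : Fin D → ℝ) : 0 ≤ x ⬝ᵥ K *ᵥ x := by
  simpa using hK.re_dotProduct_nonneg x

private lemma Ksymm {D : ℕ} (K : Matrix (Fin D) (Fin D) ℝ) (hK : K.PosSemidef) : Kᵀ = K := by
  simpa [Matrix.IsSymm] using hK.1

private lemma dot_symm' {N : ℕ} (M : Matrix (Fin N) (Fin N) ℝ) (hM : Mᵀ = M)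
    (v w : Fin N → ℝ) : v ⬝ᵥ M *ᵥ w = w ⬝ᵥ M *ᵥ v := by
  rw [Matrix.dotProduct_mulVec, ← Matrix.mulVec_transpose, hM]
  exact dotProduct_comm _ _

private lemma quad_single {N : ℕ} (M : Matrix (Fin N) (Fin N) ℝ) (hM : Mᵀ = M)
    (u : Fin N → ℝ) (n : Fin N) (s : ℝ) :
    (u + Pi.single n s) ⬝ᵥ M *ᵥ (u + Pi.single n s)
      = u ⬝ᵥ M *ᵥ u + 2 * s * (M *ᵥ u) n + s^2 * M n n := by
  rw [add_dotProduct, Matrix.mulVec_add, dotProduct_add, dotProduct_add]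
  rw [dot_symm' M hM u (Pi.single n s)]
  simp only [single_dotProduct, Matrix.mulVec_single, Pi.smul_apply, op_smul_eq_mul, Matrix.col_apply]
  ring

private lemma transfer' {D N : ℕ} (K : Matrix (Fin D) (Fin D) ℝ) (Φ₀ : Matrix (Fin D) (Fin N) ℝ)
    (u : Fin N → ℝ) (x : Fin D → ℝ) :
    u ⬝ᵥ (Φ₀ᵀ * K) *ᵥ x = (Φ₀ *ᵥ u) ⬝ᵥ K *ᵥ x := by
  rw [← Matrix.mulVec_mulVec, Matrix.dotProduct_mulVec (A := Φ₀ᵀ), Matrix.vecMul_transpose]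

private lemma K0_eq {D N : ℕ} (K : Matrix (Fin D) (Fin D) ℝ) (Φ₀ : Matrix (Fin D) (Fin N) ℝ)
    (u : Fin N → ℝ) :
    u ⬝ᵥ (Φ₀ᵀ * K * Φ₀) *ᵥ u = (Φ₀ *ᵥ u) ⬝ᵥ K *ᵥ (Φ₀ *ᵥ u) := by
  rw [← Matrix.mulVec_mulVec, transfer']

private lemma K0_symm {D N : ℕ} (K : Matrix (Fin D) (Fin D) ℝ) (hK : Kᵀ = K)
    (Φ₀ : Matrix (Fin D) (Fin N) ℝ) : (Φ₀ᵀ * K * Φ₀)ᵀ = Φ₀ᵀ * K * Φ₀ := by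
  rw [Matrix.transpose_mul, Matrix.transpose_mul, Matrix.transpose_transpose, hK, Matrix.mul_assoc]

private lemma quad_ineq {D : ℕ} (K : Matrix (Fin D) (Fin D) ℝ) (hK : K.PosSemidef)
    (ρ : ℝ) (hρ : 0 < ρ) (c w : Fin D → ℝ) :
    -((1/(4*ρ)) * (w ⬝ᵥ K *ᵥ w)) ≤ ρ * (c ⬝ᵥ K *ᵥ c) - w ⬝ᵥ K *ᵥ c := by
  have hexp : ((2*ρ)•c - w) ⬝ᵥ K *ᵥ ((2*ρ)•c - w)
      = 4*ρ^2*(c ⬝ᵥ K *ᵥ c) - 4*ρ*(w ⬝ᵥ K *ᵥ c) + w ⬝ᵥ K *ᵥ w := by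
    simp only [sub_dotProduct, dotProduct_sub, Matrix.mulVec_sub,
      Matrix.mulVec_smul, smul_dotProduct, dotProduct_smul, smul_eq_mul]
    rw [dot_symm' K (Ksymm K hK) c w]
    ring
  have key : 0 ≤ 4*ρ^2*(c ⬝ᵥ K *ᵥ c) - 4*ρ*(w ⬝ᵥ K *ᵥ c) + w ⬝ᵥ K *ᵥ w :=
    hexp ▸ psd_nonneg K hK _
  have h4 : (0:ℝ) < 4*ρ := by linarith
  have hdiv := div_nonneg key (le_of_lt h4)
  have heq : (4*ρ^2*(c ⬝ᵥ K *ᵥ c) - 4*ρ*(w ⬝ᵥ K *ᵥ c) + w ⬝ᵥ K *ᵥ w) / (4*ρ)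
      = ρ*(c ⬝ᵥ K *ᵥ c) - w ⬝ᵥ K *ᵥ c + (1/(4*ρ))*(w ⬝ᵥ K *ᵥ w) := by
    field_simp
  linarith [heq ▸ hdiv]

/-- the dual objective -/
private noncomputable def dobj {N : ℕ} (ε ρ : ℝ) (K₀ : Matrix (Fin N) (Fin N) ℝ) (y : Fin N → ℝ)
    (α β : Fin N → ℝ) : ℝ :=
  (1 / (4 * ρ)) * ((α - β) ⬝ᵥ K₀ *ᵥ (α - β))
    - (fun n => y n - ε) ⬝ᵥ α + (fun n => y n + ε) ⬝ᵥ β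

private lemma weak_duality {D N : ℕ} (ε ρ : ℝ) (hρ : 0 < ρ)
    (K : Matrix (Fin D) (Fin D) ℝ) (hK : K.PosSemidef) (Φ₀ : Matrix (Fin D) (Fin N) ℝ)
    (y : Fin N → ℝ) (c : Fin D → ℝ) (ξ ζ α β : Fin N → ℝ)
    (hfeas : ∀ n, y n - (Φ₀ᵀ * K).mulVec c n - ε ≤ ξ n ∧ 0 ≤ ξ n ∧
          -(y n) + (Φ₀ᵀ * K).mulVec c n - ε ≤ ζ n ∧ 0 ≤ ζ n)
    (hα : ∀ n, 0 ≤ α n ∧ α n ≤ 1) (hβ : ∀ n, 0 ≤ β n ∧ β n ≤ 1) :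
    -(dobj ε ρ (Φ₀ᵀ * K * Φ₀) y α β) ≤ (∑ n, (ξ n + ζ n)) + ρ * (c ⬝ᵥ K *ᵥ c) := by
  have hsum : ∑ n, (α n * (y n - (Φ₀ᵀ * K).mulVec c n - ε)
      + β n * ((Φ₀ᵀ * K).mulVec c n - y n - ε)) ≤ ∑ n, (ξ n + ζ n) := by
    apply Finset.sum_le_sum; intro n _
    obtain ⟨h1, h2, h3, h4⟩ := hfeas n
    have e1 : α n * (y n - (Φ₀ᵀ * K).mulVec c n - ε) ≤ ξ n := by
      rcases le_or_gt 0 (y n - (Φ₀ᵀ * K).mulVec c n - ε) with hc | hc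
      · nlinarith [(hα n).1, (hα n).2]
      · nlinarith [(hα n).1]
    have e2 : β n * ((Φ₀ᵀ * K).mulVec c n - y n - ε) ≤ ζ n := by
      rcases le_or_gt 0 ((Φ₀ᵀ * K).mulVec c n - y n - ε) with hc | hc
      · nlinarith [(hβ n).1, (hβ n).2]
      · nlinarith [(hβ n).1]
    linarith
  have hexp : ∑ n, (α n * (y n - (Φ₀ᵀ * K).mulVec c n - ε)
      + β n * ((Φ₀ᵀ * K).mulVec c n - y n - ε))
      = (fun n => y n - ε) ⬝ᵥ α - (fun n => y n + ε) ⬝ᵥ β - (α - β) ⬝ᵥ ((Φ₀ᵀ * K) *ᵥ c) := by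
    simp only [dotProduct, Pi.sub_apply]
    rw [← Finset.sum_sub_distrib, ← Finset.sum_sub_distrib]
    apply Finset.sum_congr rfl; intro n _; ring
  have htr : (α - β) ⬝ᵥ ((Φ₀ᵀ * K) *ᵥ c) = (Φ₀ *ᵥ (α - β)) ⬝ᵥ K *ᵥ c :=
    transfer' K Φ₀ (α - β) c
  have hq := quad_ineq K hK ρ hρ c (Φ₀ *ᵥ (α - β))
  have hk0 : (Φ₀ *ᵥ (α - β)) ⬝ᵥ K *ᵥ (Φ₀ *ᵥ (α - β))
      = (α - β) ⬝ᵥ (Φ₀ᵀ * K * Φ₀) *ᵥ (α - β) := (K0_eq K Φ₀ (α - β)).symm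
  rw [hk0] at hq
  rw [htr] at hexp
  simp only [dobj]
  linarith [hexp ▸ hsum]
private lemma dobj_shift_left {N : ℕ} (ε ρ : ℝ) (hρ : ρ ≠ 0) (K₀ : Matrix (Fin N) (Fin N) ℝ)
    (hK₀ : K₀ᵀ = K₀) (y α β : Fin N → ℝ) (n : Fin N) (s : ℝ) :
    dobj ε ρ K₀ y (α + Pi.single n s) β
      = dobj ε ρ K₀ y α β + ((1/(4*ρ)) * K₀ n n) * s^2
        - (y n - ε - (1/(2*ρ)) * (K₀ *ᵥ (α - β)) n) * s := by
  have hvec : (α + Pi.single n s) - β = (α - β) + Pi.single n s := by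
    funext m; simp only [Pi.sub_apply, Pi.add_apply]; ring
  rw [dobj, dobj, hvec, quad_single K₀ hK₀ (α - β) n s, dotProduct_add,
    dotProduct_single]
  field_simp
  ring

private lemma dobj_shift_right {N : ℕ} (ε ρ : ℝ) (hρ : ρ ≠ 0) (K₀ : Matrix (Fin N) (Fin N) ℝ)
    (hK₀ : K₀ᵀ = K₀) (y α β : Fin N → ℝ) (n : Fin N) (s : ℝ) :
    dobj ε ρ K₀ y α (β + Pi.single n s)
      = dobj ε ρ K₀ y α β + ((1/(4*ρ)) * K₀ n n) * s^2
        - ((1/(2*ρ)) * (K₀ *ᵥ (α - β)) n - y n - ε) * s := by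
  have hvec : α - (β + Pi.single n s) = (α - β) + Pi.single n (-s) := by
    funext m; simp only [Pi.sub_apply, Pi.add_apply, Pi.single_apply]
    by_cases h : m = n <;> simp [h] <;> ring
  rw [dobj, dobj, hvec, quad_single K₀ hK₀ (α - β) n (-s), dotProduct_add,
    dotProduct_single]
  field_simp
  ring

/-- Strong duality between the primal SVM-type quadratic program (9) and its dual (10):
the primal optimal value equals the negative of the dual optimal value. -/
theorem svm_strong_duality
    (D N : ℕ) (hD : 0 < D) (hN : 0 < N) (ε ρ : ℝ) (hε : 0 ≤ ε) (hρ : 0 < ρ)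
    (K : Matrix (Fin D) (Fin D) ℝ) (hK : K.PosSemidef)
    (Φ₀ : Matrix (Fin D) (Fin N) ℝ) (y : Fin N → ℝ) :
    sInf {v : ℝ | ∃ (c : Fin D → ℝ) (ξ ζ : Fin N → ℝ),
        v = (∑ n, (ξ n + ζ n)) + ρ * (c ⬝ᵥ K.mulVec c) ∧
        ∀ n, y n - (Φ₀ᵀ * K).mulVec c n - ε ≤ ξ n ∧ 0 ≤ ξ n ∧
          -(y n) + (Φ₀ᵀ * K).mulVec c n - ε ≤ ζ n ∧ 0 ≤ ζ n} =
    -sInf {v : ℝ | ∃ α β : Fin N → ℝ,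
        v = (1 / (4 * ρ)) * ((α - β) ⬝ᵥ (Φ₀ᵀ * K * Φ₀).mulVec (α - β))
          - (fun n => y n - ε) ⬝ᵥ α + (fun n => y n + ε) ⬝ᵥ β ∧
        (∀ n, 0 ≤ α n ∧ α n ≤ 1) ∧ (∀ n, 0 ≤ β n ∧ β n ≤ 1)} := by
  classical
  have hKs : Kᵀ = K := Ksymm K hK
  have hK₀s : (Φ₀ᵀ * K * Φ₀)ᵀ = Φ₀ᵀ * K * Φ₀ := K0_symm K hKs Φ₀
  have hρ' : ρ ≠ 0 := ne_of_gt hρ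
  -- minimize the dual objective over the compact box
  have hBc : IsCompact ((Set.Icc (0:Fin N → ℝ) 1) ×ˢ (Set.Icc (0:Fin N → ℝ) 1)) :=
    isCompact_Icc.prod isCompact_Icc
  have hBne : ((Set.Icc (0:Fin N → ℝ) 1) ×ˢ (Set.Icc (0:Fin N → ℝ) 1)).Nonempty :=
    ⟨(0,0), ⟨⟨le_refl _, zero_le_one⟩, le_refl _, zero_le_one⟩⟩
  have hcont : Continuous (fun p : (Fin N → ℝ) × (Fin N → ℝ) =>
      dobj ε ρ (Φ₀ᵀ * K * Φ₀) y p.1 p.2) := by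
    have h1 : Continuous (fun p : (Fin N → ℝ) × (Fin N → ℝ) => p.1 - p.2) :=
      continuous_fst.sub continuous_snd
    simp only [dobj]
    exact ((continuous_const.mul (h1.dotProduct
      (continuous_const.matrix_mulVec h1))).sub
      (continuous_const.dotProduct continuous_fst)).add
      (continuous_const.dotProduct continuous_snd)
  obtain ⟨⟨α, β⟩, hpB, hpmin⟩ := hBc.exists_isMinOn hBne hcont.continuousOn
  have hα : ∀ n, 0 ≤ α n ∧ α n ≤ 1 := fun n => ⟨hpB.1.1 n, hpB.1.2 n⟩
  have hβ : ∀ n, 0 ≤ β n ∧ β n ≤ 1 := fun n => ⟨hpB.2.1 n, hpB.2.2 n⟩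
  have hmin : ∀ α' β' : Fin N → ℝ, (∀ n, 0 ≤ α' n ∧ α' n ≤ 1) → (∀ n, 0 ≤ β' n ∧ β' n ≤ 1) →
      dobj ε ρ (Φ₀ᵀ * K * Φ₀) y α β ≤ dobj ε ρ (Φ₀ᵀ * K * Φ₀) y α' β' := by
    intro α' β' h1 h2
    exact hpmin (Set.mk_mem_prod ⟨fun m => (h1 m).1, fun m => (h1 m).2⟩
      ⟨fun m => (h2 m).1, fun m => (h2 m).2⟩)
  -- diagonal of K₀ is nonnegative
  have haK : ∀ n : Fin N, 0 ≤ (1/(4*ρ)) * (Φ₀ᵀ * K * Φ₀) n n := by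
    intro n
    have h := psd_nonneg K hK (Φ₀ *ᵥ Pi.single n 1)
    rw [← K0_eq K Φ₀ (Pi.single n 1)] at h
    simp only [single_dotProduct, Matrix.mulVec_single, Pi.smul_apply, op_smul_eq_mul, Matrix.col_apply, one_mul, mul_one] at h
    have h4 : (0:ℝ) ≤ 1/(4*ρ) := by positivity
    exact mul_nonneg h4 h
  -- KKT conditions at the minimizer
  have hkktα : ∀ n, α n * (y n - ε - (1/(2*ρ)) * ((Φ₀ᵀ * K * Φ₀) *ᵥ (α - β)) n)
      = max (y n - ε - (1/(2*ρ)) * ((Φ₀ᵀ * K * Φ₀) *ᵥ (α - β)) n) 0 := by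
    intro n
    apply kkt_coord _ _ _ (haK n) (hα n).1 (hα n).2
    intro s hs0 hs1
    have hmemα : ∀ m, 0 ≤ (α + Pi.single n s : Fin N → ℝ) m ∧ (α + Pi.single n s : Fin N → ℝ) m ≤ 1 := by
      intro m
      by_cases h : m = n
      · subst h; simpa using ⟨hs0, hs1⟩
      · simpa [Pi.single_apply, h] using hα m
    have h := hmin (α + Pi.single n s) β hmemα hβ
    rw [dobj_shift_left ε ρ hρ' _ hK₀s y α β n s] at h
    linarith
  have hkktβ : ∀ n, β n * ((1/(2*ρ)) * ((Φ₀ᵀ * K * Φ₀) *ᵥ (α - β)) n - y n - ε)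
      = max ((1/(2*ρ)) * ((Φ₀ᵀ * K * Φ₀) *ᵥ (α - β)) n - y n - ε) 0 := by
    intro n
    apply kkt_coord _ _ _ (haK n) (hβ n).1 (hβ n).2
    intro s hs0 hs1
    have hmemβ : ∀ m, 0 ≤ (β + Pi.single n s : Fin N → ℝ) m ∧ (β + Pi.single n s : Fin N → ℝ) m ≤ 1 := by
      intro m
      by_cases h : m = n
      · subst h; simpa using ⟨hs0, hs1⟩
      · simpa [Pi.single_apply, h] using hβ m
    have h := hmin α (β + Pi.single n s) hα hmemβ
    rw [dobj_shift_right ε ρ hρ' _ hK₀s y α β n s] at h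
    linarith
  -- the optimal primal point
  set cs : Fin D → ℝ := (1/(2*ρ)) • (Φ₀ *ᵥ (α - β)) with hcs
  have hgs : ∀ n, ((Φ₀ᵀ * K) *ᵥ cs) n = (1/(2*ρ)) * ((Φ₀ᵀ * K * Φ₀) *ᵥ (α - β)) n := by
    intro n
    rw [hcs, Matrix.mulVec_smul, Matrix.mulVec_mulVec]
    simp [smul_eq_mul]
  set ξs : Fin N → ℝ := fun n => max (y n - ε - (1/(2*ρ)) * ((Φ₀ᵀ * K * Φ₀) *ᵥ (α - β)) n) 0
    with hξs
  set ζs : Fin N → ℝ := fun n => max ((1/(2*ρ)) * ((Φ₀ᵀ * K * Φ₀) *ᵥ (α - β)) n - y n - ε) 0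
    with hζs
  have hfeas : ∀ n, y n - (Φ₀ᵀ * K).mulVec cs n - ε ≤ ξs n ∧ 0 ≤ ξs n ∧
      -(y n) + (Φ₀ᵀ * K).mulVec cs n - ε ≤ ζs n ∧ 0 ≤ ζs n := by
    intro n
    refine ⟨?_, le_max_right _ _, ?_, le_max_right _ _⟩
    · rw [hξs]
      calc y n - (Φ₀ᵀ * K).mulVec cs n - ε
          = y n - ε - (1/(2*ρ)) * ((Φ₀ᵀ * K * Φ₀) *ᵥ (α - β)) n := by rw [hgs n]; ring
        _ ≤ _ := le_max_left _ _
    · rw [hζs]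
      calc -(y n) + (Φ₀ᵀ * K).mulVec cs n - ε
          = (1/(2*ρ)) * ((Φ₀ᵀ * K * Φ₀) *ᵥ (α - β)) n - y n - ε := by rw [hgs n]; ring
        _ ≤ _ := le_max_left _ _
  -- the value of the primal at the optimal point
  have hsumv : ∀ n ∈ Finset.univ, ξs n + ζs n
      = (y n - ε) * α n - (y n + ε) * β n
        - (α n - β n) * ((1/(2*ρ)) * ((Φ₀ᵀ * K * Φ₀) *ᵥ (α - β)) n) := by
    intro n _
    rw [hξs, hζs]
    simp only
    rw [← hkktα n, ← hkktβ n]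
    ring
  have hsum : ∑ n, (ξs n + ζs n)
      = (fun n => y n - ε) ⬝ᵥ α - (fun n => y n + ε) ⬝ᵥ β
        - (1/(2*ρ)) * ((α - β) ⬝ᵥ (Φ₀ᵀ * K * Φ₀) *ᵥ (α - β)) := by
    rw [Finset.sum_congr rfl hsumv]
    simp only [dotProduct, Pi.sub_apply]
    rw [Finset.mul_sum, ← Finset.sum_sub_distrib, ← Finset.sum_sub_distrib]
    apply Finset.sum_congr rfl; intro n _; ring
  have hquad : cs ⬝ᵥ K *ᵥ cs
      = (1/(2*ρ)) * ((1/(2*ρ)) * ((α - β) ⬝ᵥ (Φ₀ᵀ * K * Φ₀) *ᵥ (α - β))) := by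
    rw [hcs]
    simp only [smul_dotProduct, Matrix.mulVec_smul, dotProduct_smul, smul_eq_mul]
    rw [← K0_eq K Φ₀ (α - β)]
  have hvaleq : (∑ n, (ξs n + ζs n)) + ρ * (cs ⬝ᵥ K *ᵥ cs)
      = -(dobj ε ρ (Φ₀ᵀ * K * Φ₀) y α β) := by
    rw [hsum, hquad, dobj]
    field_simp
    ring
  -- compute the dual infimum
  have hdual : sInf {v : ℝ | ∃ α β : Fin N → ℝ,
      v = (1 / (4 * ρ)) * ((α - β) ⬝ᵥ (Φ₀ᵀ * K * Φ₀).mulVec (α - β))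
        - (fun n => y n - ε) ⬝ᵥ α + (fun n => y n + ε) ⬝ᵥ β ∧
      (∀ n, 0 ≤ α n ∧ α n ≤ 1) ∧ (∀ n, 0 ≤ β n ∧ β n ≤ 1)}
      = dobj ε ρ (Φ₀ᵀ * K * Φ₀) y α β := by
    have hmem : dobj ε ρ (Φ₀ᵀ * K * Φ₀) y α β ∈ {v : ℝ | ∃ α β : Fin N → ℝ,
        v = (1 / (4 * ρ)) * ((α - β) ⬝ᵥ (Φ₀ᵀ * K * Φ₀).mulVec (α - β))
          - (fun n => y n - ε) ⬝ᵥ α + (fun n => y n + ε) ⬝ᵥ β ∧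
        (∀ n, 0 ≤ α n ∧ α n ≤ 1) ∧ (∀ n, 0 ≤ β n ∧ β n ≤ 1)} :=
      ⟨α, β, rfl, hα, hβ⟩
    have hlb : ∀ v ∈ {v : ℝ | ∃ α β : Fin N → ℝ,
        v = (1 / (4 * ρ)) * ((α - β) ⬝ᵥ (Φ₀ᵀ * K * Φ₀).mulVec (α - β))
          - (fun n => y n - ε) ⬝ᵥ α + (fun n => y n + ε) ⬝ᵥ β ∧
        (∀ n, 0 ≤ α n ∧ α n ≤ 1) ∧ (∀ n, 0 ≤ β n ∧ β n ≤ 1)},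
        dobj ε ρ (Φ₀ᵀ * K * Φ₀) y α β ≤ v := by
      rintro v ⟨α', β', rfl, h1, h2⟩
      exact hmin α' β' h1 h2
    exact le_antisymm (csInf_le ⟨_, hlb⟩ hmem) (le_csInf ⟨_, hmem⟩ hlb)
  -- compute the primal infimum
  have hprimal : sInf {v : ℝ | ∃ (c : Fin D → ℝ) (ξ ζ : Fin N → ℝ),
      v = (∑ n, (ξ n + ζ n)) + ρ * (c ⬝ᵥ K.mulVec c) ∧
      ∀ n, y n - (Φ₀ᵀ * K).mulVec c n - ε ≤ ξ n ∧ 0 ≤ ξ n ∧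
        -(y n) + (Φ₀ᵀ * K).mulVec c n - ε ≤ ζ n ∧ 0 ≤ ζ n}
      = -(dobj ε ρ (Φ₀ᵀ * K * Φ₀) y α β) := by
    have hmem : -(dobj ε ρ (Φ₀ᵀ * K * Φ₀) y α β) ∈ {v : ℝ | ∃ (c : Fin D → ℝ) (ξ ζ : Fin N → ℝ),
        v = (∑ n, (ξ n + ζ n)) + ρ * (c ⬝ᵥ K.mulVec c) ∧
        ∀ n, y n - (Φ₀ᵀ * K).mulVec c n - ε ≤ ξ n ∧ 0 ≤ ξ n ∧
          -(y n) + (Φ₀ᵀ * K).mulVec c n - ε ≤ ζ n ∧ 0 ≤ ζ n} :=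
      ⟨cs, ξs, ζs, hvaleq.symm, hfeas⟩
    have hlb : ∀ v ∈ {v : ℝ | ∃ (c : Fin D → ℝ) (ξ ζ : Fin N → ℝ),
        v = (∑ n, (ξ n + ζ n)) + ρ * (c ⬝ᵥ K.mulVec c) ∧
        ∀ n, y n - (Φ₀ᵀ * K).mulVec c n - ε ≤ ξ n ∧ 0 ≤ ξ n ∧
          -(y n) + (Φ₀ᵀ * K).mulVec c n - ε ≤ ζ n ∧ 0 ≤ ζ n},
        -(dobj ε ρ (Φ₀ᵀ * K * Φ₀) y α β) ≤ v := by
      rintro v ⟨c, ξ, ζ, rfl, hf⟩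
      exact weak_duality ε ρ hρ K hK Φ₀ y c ξ ζ α β hf hα hβ
    exact le_antisymm (csInf_le ⟨_, hlb⟩ hmem) (le_csInf ⟨_, hmem⟩ hlb)
  rw [hprimal, hdual]
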